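/- The group presented by ⟨u_1, u_2, u_3, u_4 | u_i^2 = (u_i u_j)^3 = e for all i ≠ j, (u_1 u_2 u_3 u_2)^2 = (u_1 u_3 u_4 u_3)^2 = (u_2 u_3 u_4 u_3)^2 = e⟩ is isomorphic to Sym_5, of order 120. -/

import Mathlib

namespace Stmt15

section helpers

variable {H : Type*} [Group H]

lemma dup {x : H} (hx : x * x = 1) : ∀ z, x * (x * z) = z := fun z => by
  rw [← mul_assoc, hx, one_mul]

lemma braid_aux {x y : H} (hx : x * x = 1) (hy : y * y = 1) (h : (x * y) ^ 3 = 1) :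
    x * y * x = y * x * y := by
  have h1 : (x*y)*(x*y)*(x*y) = 1 := by
    simpa [pow_succ, pow_zero, one_mul] using h
  have h3 : (y*x*y) * (y*x*y) = 1 := by
    simp only [mul_assoc]
    rw [dup hy, dup hx, hy]
  have h4 : (x*y*x) * (y*x*y) = (x*y)*(x*y)*(x*y) := by
    simp [mul_assoc]
  have h5 : (x*y*x) * (y*x*y) = (y*x*y) * (y*x*y) := by rw [h4, h1, h3]
  exact mul_right_cancel h5

lemma comm_aux {x w : H} (hx : x * x = 1) (hw : w * w = 1) (h : (x * w) ^ 2 = 1) :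
    Commute x w := by
  have h1 : x * w * (x * w) = 1 := by simpa [pow_two] using h
  have h3 : w * (x * w) = x := by
    calc w * (x * w) = (x*x) * (w * (x * w)) := by rw [hx, one_mul]
    _ = x * (x * w * (x * w)) := by simp [mul_assoc]
    _ = x := by rw [h1, mul_one]
  show x * w = w * x
  calc x * w = (w * w) * (x * w) := by rw [hw, one_mul]
  _ = w * (w * (x * w)) := by rw [mul_assoc]
  _ = w * x := by rw [h3]

lemma conj_sq {g x : H} (hg : g * g = 1) (hx : x * x = 1) :
    (g * x * g) * (g * x * g) = 1 := by
  simp only [mul_assoc]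
  rw [dup hg, dup hx, hg]

lemma conj_comm {g x w : H} (hg : g * g = 1) (h : Commute x w) :
    Commute (g * x * g) (g * w * g) := by
  show (g * x * g) * (g * w * g) = (g * w * g) * (g * x * g)
  calc (g * x * g) * (g * w * g) = g * (x * (g * g) * w) * g := by simp [mul_assoc]
  _ = g * (x * w) * g := by rw [hg]; simp
  _ = g * (w * x) * g := by rw [h.eq]
  _ = g * (w * (g*g) * x) * g := by rw [hg]; simp
  _ = (g * w * g) * (g * x * g) := by simp [mul_assoc]

lemma keyid {w x y : H} (hx : x * x = 1) (h : Commute w (x * y * x)) :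
    w * x * y = (x * y * x) * (w * x) := by
  have key : (x*y*x) * (w*x) = w * x * y := by
    calc (x*y*x) * (w*x) = ((x*y*x)*w)*x := (mul_assoc _ _ _).symm
    _ = (w*(x*y*x))*x := by rw [← h.eq]
    _ = w * (x * (y * (x*x))) := by simp [mul_assoc]
    _ = w * x * y := by rw [hx]; simp [mul_assoc]
  exact key.symm

lemma conj3 {g w : H} (hg : g * g = 1) (h : Commute g w) (z : H) :
    g * (w * (g * z)) = w * z := by
  calc g * (w * (g * z)) = (g * w) * (g * z) := (mul_assoc _ _ _).symm
  _ = (w * g) * (g * z) := by rw [h.eq]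
  _ = w * (g * (g * z)) := mul_assoc _ _ _
  _ = w * z := by rw [dup hg]

lemma braid3 {x y : H} (hb : x * y * x = y * x * y) (z : H) :
    x * (y * (x * z)) = y * (x * (y * z)) := by
  have := congrArg (· * z) hb
  simpa [mul_assoc] using this

end helpers

/-- The relators of the group `⟨u₁,u₂,u₃,u₄ ∣ uᵢ² = (uᵢuⱼ)³ = e (i ≠ j),
(u₁u₂u₃u₂)² = (u₁u₃u₄u₃)² = (u₂u₃u₄u₃)² = e⟩`. -/
def rels : Set (FreeGroup (Fin 4)) :=
  let u := fun i : Fin 4 => FreeGroup.of i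
  {x | ∃ i, x = u i ^ 2} ∪
  {x | ∃ i j, i ≠ j ∧ x = (u i * u j) ^ 3} ∪
  {(u 0 * (u 1 * u 2 * u 1)) ^ 2, (u 0 * (u 2 * u 3 * u 2)) ^ 2,
    (u 1 * (u 2 * u 3 * u 2)) ^ 2}

abbrev G := PresentedGroup rels


lemma relG : ∀ r ∈ rels, (PresentedGroup.mk rels r : G) = 1 := by
  intro r hr
  exact (QuotientGroup.eq_one_iff r).mpr (Subgroup.subset_normalClosure hr)

def a : G := PresentedGroup.of 0
def b : G := PresentedGroup.of 1
def c : G := PresentedGroup.of 2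
def d : G := PresentedGroup.of 3

lemma rel_sq (i : Fin 4) : (PresentedGroup.of i : G) * PresentedGroup.of i = 1 := by
  have h := relG _ (show (FreeGroup.of i ^ 2) ∈ rels by
    unfold rels; exact Or.inl (Or.inl ⟨i, rfl⟩))
  rw [map_pow, pow_two] at h
  exact h

lemma rel_cube (i j : Fin 4) (hij : i ≠ j) :
    ((PresentedGroup.of i : G) * PresentedGroup.of j) ^ 3 = 1 := by
  have h := relG _ (show ((FreeGroup.of i * FreeGroup.of j) ^ 3) ∈ rels by
    unfold rels; exact Or.inl (Or.inr ⟨i, j, hij, rfl⟩))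
  rw [map_pow, map_mul] at h
  exact h

lemma sqa : a * a = 1 := rel_sq 0
lemma sqb : b * b = 1 := rel_sq 1
lemma sqc : c * c = 1 := rel_sq 2
lemma sqd : d * d = 1 := rel_sq 3

lemma braid_ab : a * b * a = b * a * b := braid_aux sqa sqb (rel_cube 0 1 (by decide))
lemma braid_ba : b * a * b = a * b * a := braid_ab.symm
lemma braid_ca : c * a * c = a * c * a := (braid_aux sqa sqc (rel_cube 0 2 (by decide))).symm
lemma braid_bc : b * c * b = c * b * c := braid_aux sqb sqc (rel_cube 1 2 (by decide))
lemma braid_cb : c * b * c = b * c * b := braid_bc.symm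
lemma braid_da : d * a * d = a * d * a := (braid_aux sqa sqd (rel_cube 0 3 (by decide))).symm
lemma braid_db : d * b * d = b * d * b := (braid_aux sqb sqd (rel_cube 1 3 (by decide))).symm
lemma braid_dc : d * c * d = c * d * c := (braid_aux sqc sqd (rel_cube 2 3 (by decide))).symm

lemma rel_e1 : (a * (b * c * b)) ^ 2 = 1 := by
  have h := relG _ (show ((FreeGroup.of (0:Fin 4) *
      (FreeGroup.of 1 * FreeGroup.of 2 * FreeGroup.of 1)) ^ 2) ∈ rels by
    unfold rels; exact Or.inr (Or.inl rfl))
  simp only [map_pow, map_mul] at h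
  exact h

lemma rel_e2 : (a * (c * d * c)) ^ 2 = 1 := by
  have h := relG _ (show ((FreeGroup.of (0:Fin 4) *
      (FreeGroup.of 2 * FreeGroup.of 3 * FreeGroup.of 2)) ^ 2) ∈ rels by
    unfold rels; exact Or.inr (Or.inr (Or.inl rfl)))
  simp only [map_pow, map_mul] at h
  exact h

lemma rel_e3 : (b * (c * d * c)) ^ 2 = 1 := by
  have h := relG _ (show ((FreeGroup.of (1:Fin 4) *
      (FreeGroup.of 2 * FreeGroup.of 3 * FreeGroup.of 2)) ^ 2) ∈ rels by
    unfold rels; exact Or.inr (Or.inr (Or.inr rfl)))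
  simp only [map_pow, map_mul] at h
  exact h

lemma comm_a_bcb : Commute a (b * c * b) := comm_aux sqa (conj_sq sqb sqc) rel_e1
lemma comm_a_cdc : Commute a (c * d * c) := comm_aux sqa (conj_sq sqc sqd) rel_e2
lemma comm_b_cdc : Commute b (c * d * c) := comm_aux sqb (conj_sq sqc sqd) rel_e3

lemma comm_c_aba : Commute c (a * b * a) := by
  have h := conj_comm sqb comm_a_bcb
  have e1 : b * (b * c * b) * b = c := by
    simp only [mul_assoc]; rw [dup sqb, sqb, mul_one]
  rw [e1, braid_ba] at h
  exact h.symm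

lemma comm_c_bab : Commute c (b * a * b) := by rw [braid_ba]; exact comm_c_aba

lemma comm_d_aca : Commute d (a * c * a) := by
  have h := conj_comm sqc comm_a_cdc
  have e1 : c * (c * d * c) * c = d := by
    simp only [mul_assoc]; rw [dup sqc, sqc, mul_one]
  rw [e1, braid_ca] at h
  exact h.symm

lemma comm_d_bcb : Commute d (b * c * b) := by
  have h := conj_comm sqc comm_b_cdc
  have e1 : c * (c * d * c) * c = d := by
    simp only [mul_assoc]; rw [dup sqc, sqc, mul_one]
  rw [e1, braid_cb] at h
  exact h.symm

lemma comm_d_aba : Commute d (a * b * a) := by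
  have hkey : (a*c*a) * ((b*c*b) * (a*c*a)) = a * b * a := by
    have L1 : ∀ z : G, a*(b*(c*(b*(a*z)))) = b*(c*(b*z)) := fun z => by
      simpa [mul_assoc] using conj3 sqa comm_a_bcb z
    simp only [mul_assoc]
    rw [L1, braid3 braid_cb, dup sqb, dup sqc]
  have h : Commute d ((a*c*a) * ((b*c*b) * (a*c*a))) :=
    comm_d_aca.mul_right (comm_d_bcb.mul_right comm_d_aca)
  rwa [hkey] at h

lemma comm_d_bab : Commute d (b * a * b) := by rw [braid_ba]; exact comm_d_aba
lemma comm_d_cac : Commute d (c * a * c) := by rw [braid_ca]; exact comm_d_aca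
lemma comm_d_cbc : Commute d (c * b * c) := by rw [braid_cb]; exact comm_d_bcb


-- keyid instances
lemma k_cab : c*a*b = (a*b*a)*(c*a) := keyid sqa comm_c_aba
lemma k_cba : c*b*a = (b*a*b)*(c*b) := keyid sqb comm_c_bab
lemma k_dab : d*a*b = (a*b*a)*(d*a) := keyid sqa comm_d_aba
lemma k_dac : d*a*c = (a*c*a)*(d*a) := keyid sqa comm_d_aca
lemma k_dba : d*b*a = (b*a*b)*(d*b) := keyid sqb comm_d_bab
lemma k_dbc : d*b*c = (b*c*b)*(d*b) := keyid sqb comm_d_bcb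
lemma k_dca : d*c*a = (c*a*c)*(d*c) := keyid sqc comm_d_cac
lemma k_dcb : d*c*b = (c*b*c)*(d*c) := keyid sqc comm_d_cbc

def w1 : Fin 2 → G := fun x => match x with
  | ⟨0,_⟩ => 1 | ⟨1,_⟩ => a
def w2 : Fin 3 → G := fun x => match x with
  | ⟨0,_⟩ => 1 | ⟨1,_⟩ => b | ⟨2,_⟩ => b*a
def w3 : Fin 4 → G := fun x => match x with
  | ⟨0,_⟩ => 1 | ⟨1,_⟩ => c | ⟨2,_⟩ => c*a | ⟨3,_⟩ => c*b
def w4 : Fin 5 → G := fun x => match x with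
  | ⟨0,_⟩ => 1 | ⟨1,_⟩ => d | ⟨2,_⟩ => d*a | ⟨3,_⟩ => d*b | ⟨4,_⟩ => d*c

def S2 (g : G) : Prop := ∃ x y, g = w1 x * w2 y
def S3 (g : G) : Prop := ∃ h, S2 h ∧ ∃ z, g = h * w3 z
def S4 (g : G) : Prop := ∃ h, S3 h ∧ ∃ z, g = h * w4 z

lemma L1 : ∀ x : Fin 2, ∃ x', w1 x * a = w1 x' := by
  intro x; rcases x with ⟨v, hv⟩; interval_cases v
  · exact ⟨1, by show (1:G) * a = a; rw [one_mul]⟩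
  · exact ⟨0, by show a * a = (1:G); rw [sqa]⟩

lemma L2a (g : G) (h : S2 g) : S2 (g * a) := by
  obtain ⟨x, y, rfl⟩ := h; rcases y with ⟨v, hv⟩; interval_cases v
  · obtain ⟨x', hx'⟩ := L1 x
    exact ⟨x', 0, by show w1 x * 1 * a = w1 x' * 1; rw [mul_one, mul_one, hx']⟩
  · exact ⟨x, 2, by show w1 x * b * a = w1 x * (b*a); rw [mul_assoc]⟩
  · exact ⟨x, 1, by show w1 x * (b*a) * a = w1 x * b; rw [mul_assoc, mul_assoc, sqa, mul_one]⟩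

lemma L2b (g : G) (h : S2 g) : S2 (g * b) := by
  obtain ⟨x, y, rfl⟩ := h; rcases y with ⟨v, hv⟩; interval_cases v
  · exact ⟨x, 1, by show w1 x * 1 * b = w1 x * b; rw [mul_one]⟩
  · exact ⟨x, 0, by show w1 x * b * b = w1 x * 1; rw [mul_assoc, sqb]⟩
  · obtain ⟨x', hx'⟩ := L1 x
    refine ⟨x', 2, ?_⟩
    show w1 x * (b*a) * b = w1 x' * (b*a)
    conv_lhs => rw [mul_assoc]
    have e : (b*a)*b = a*(b*a) := by rw [show (b*a)*b = b*a*b from rfl, braid_ba, mul_assoc]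
    rw [e, ← mul_assoc, hx']

lemma L3a (g : G) (h : S3 g) : S3 (g * a) := by
  obtain ⟨h2, hh2, z, rfl⟩ := h; rcases z with ⟨v, hv⟩; interval_cases v
  · exact ⟨h2 * a, L2a _ hh2, 0, by show h2 * 1 * a = h2 * a * 1; rw [mul_one, mul_one]⟩
  · exact ⟨h2, hh2, 2, by show h2 * c * a = h2 * (c*a); rw [mul_assoc]⟩
  · exact ⟨h2, hh2, 1, by show h2 * (c*a) * a = h2 * c; rw [mul_assoc, mul_assoc, sqa, mul_one]⟩
  · refine ⟨h2*b*a*b, L2b _ (L2a _ (L2b _ hh2)), 3, ?_⟩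
    show h2 * (c*b) * a = h2*b*a*b * (c*b)
    conv_lhs => rw [mul_assoc, show (c*b)*a = c*b*a from rfl, k_cba]
    simp only [mul_assoc]

lemma L3b (g : G) (h : S3 g) : S3 (g * b) := by
  obtain ⟨h2, hh2, z, rfl⟩ := h; rcases z with ⟨v, hv⟩; interval_cases v
  · exact ⟨h2 * b, L2b _ hh2, 0, by show h2 * 1 * b = h2 * b * 1; rw [mul_one, mul_one]⟩
  · exact ⟨h2, hh2, 3, by show h2 * c * b = h2 * (c*b); rw [mul_assoc]⟩
  · refine ⟨h2*a*b*a, L2a _ (L2b _ (L2a _ hh2)), 2, ?_⟩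
    show h2 * (c*a) * b = h2*a*b*a * (c*a)
    conv_lhs => rw [mul_assoc, show (c*a)*b = c*a*b from rfl, k_cab]
    simp only [mul_assoc]
  · exact ⟨h2, hh2, 1, by show h2 * (c*b) * b = h2 * c; rw [mul_assoc, mul_assoc, sqb, mul_one]⟩

lemma L3c (g : G) (h : S3 g) : S3 (g * c) := by
  obtain ⟨h2, hh2, z, rfl⟩ := h; rcases z with ⟨v, hv⟩; interval_cases v
  · exact ⟨h2, hh2, 1, by show h2 * 1 * c = h2 * c; rw [mul_one]⟩
  · exact ⟨h2, hh2, 0, by show h2 * c * c = h2 * 1; rw [mul_assoc, sqc]⟩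
  · refine ⟨h2*a, L2a _ hh2, 2, ?_⟩
    show h2 * (c*a) * c = h2*a * (c*a)
    conv_lhs => rw [mul_assoc, show (c*a)*c = c*a*c from rfl, braid_ca]
    simp only [mul_assoc]
  · refine ⟨h2*b, L2b _ hh2, 3, ?_⟩
    show h2 * (c*b) * c = h2*b * (c*b)
    conv_lhs => rw [mul_assoc, show (c*b)*c = c*b*c from rfl, braid_cb]
    simp only [mul_assoc]

lemma L4a (g : G) (h : S4 g) : S4 (g * a) := by
  obtain ⟨h3, hh3, z, rfl⟩ := h; rcases z with ⟨v, hv⟩; interval_cases v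
  · exact ⟨h3 * a, L3a _ hh3, 0, by show h3 * 1 * a = h3 * a * 1; rw [mul_one, mul_one]⟩
  · exact ⟨h3, hh3, 2, by show h3 * d * a = h3 * (d*a); rw [mul_assoc]⟩
  · exact ⟨h3, hh3, 1, by show h3 * (d*a) * a = h3 * d; rw [mul_assoc, mul_assoc, sqa, mul_one]⟩
  · refine ⟨h3*b*a*b, L3b _ (L3a _ (L3b _ hh3)), 3, ?_⟩
    show h3 * (d*b) * a = h3*b*a*b * (d*b)
    conv_lhs => rw [mul_assoc, show (d*b)*a = d*b*a from rfl, k_dba]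
    simp only [mul_assoc]
  · refine ⟨h3*c*a*c, L3c _ (L3a _ (L3c _ hh3)), 4, ?_⟩
    show h3 * (d*c) * a = h3*c*a*c * (d*c)
    conv_lhs => rw [mul_assoc, show (d*c)*a = d*c*a from rfl, k_dca]
    simp only [mul_assoc]

lemma L4b (g : G) (h : S4 g) : S4 (g * b) := by
  obtain ⟨h3, hh3, z, rfl⟩ := h; rcases z with ⟨v, hv⟩; interval_cases v
  · exact ⟨h3 * b, L3b _ hh3, 0, by show h3 * 1 * b = h3 * b * 1; rw [mul_one, mul_one]⟩
  · exact ⟨h3, hh3, 3, by show h3 * d * b = h3 * (d*b); rw [mul_assoc]⟩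
  · refine ⟨h3*a*b*a, L3a _ (L3b _ (L3a _ hh3)), 2, ?_⟩
    show h3 * (d*a) * b = h3*a*b*a * (d*a)
    conv_lhs => rw [mul_assoc, show (d*a)*b = d*a*b from rfl, k_dab]
    simp only [mul_assoc]
  · exact ⟨h3, hh3, 1, by show h3 * (d*b) * b = h3 * d; rw [mul_assoc, mul_assoc, sqb, mul_one]⟩
  · refine ⟨h3*c*b*c, L3c _ (L3b _ (L3c _ hh3)), 4, ?_⟩
    show h3 * (d*c) * b = h3*c*b*c * (d*c)
    conv_lhs => rw [mul_assoc, show (d*c)*b = d*c*b from rfl, k_dcb]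
    simp only [mul_assoc]

lemma L4c (g : G) (h : S4 g) : S4 (g * c) := by
  obtain ⟨h3, hh3, z, rfl⟩ := h; rcases z with ⟨v, hv⟩; interval_cases v
  · exact ⟨h3 * c, L3c _ hh3, 0, by show h3 * 1 * c = h3 * c * 1; rw [mul_one, mul_one]⟩
  · exact ⟨h3, hh3, 4, by show h3 * d * c = h3 * (d*c); rw [mul_assoc]⟩
  · refine ⟨h3*a*c*a, L3a _ (L3c _ (L3a _ hh3)), 2, ?_⟩
    show h3 * (d*a) * c = h3*a*c*a * (d*a)
    conv_lhs => rw [mul_assoc, show (d*a)*c = d*a*c from rfl, k_dac]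
    simp only [mul_assoc]
  · refine ⟨h3*b*c*b, L3b _ (L3c _ (L3b _ hh3)), 3, ?_⟩
    show h3 * (d*b) * c = h3*b*c*b * (d*b)
    conv_lhs => rw [mul_assoc, show (d*b)*c = d*b*c from rfl, k_dbc]
    simp only [mul_assoc]
  · exact ⟨h3, hh3, 1, by show h3 * (d*c) * c = h3 * d; rw [mul_assoc, mul_assoc, sqc, mul_one]⟩

lemma L4d (g : G) (h : S4 g) : S4 (g * d) := by
  obtain ⟨h3, hh3, z, rfl⟩ := h; rcases z with ⟨v, hv⟩; interval_cases v
  · exact ⟨h3, hh3, 1, by show h3 * 1 * d = h3 * d; rw [mul_one]⟩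
  · exact ⟨h3, hh3, 0, by show h3 * d * d = h3 * 1; rw [mul_assoc, sqd]⟩
  · refine ⟨h3*a, L3a _ hh3, 2, ?_⟩
    show h3 * (d*a) * d = h3*a * (d*a)
    conv_lhs => rw [mul_assoc, show (d*a)*d = d*a*d from rfl, braid_da]
    simp only [mul_assoc]
  · refine ⟨h3*b, L3b _ hh3, 3, ?_⟩
    show h3 * (d*b) * d = h3*b * (d*b)
    conv_lhs => rw [mul_assoc, show (d*b)*d = d*b*d from rfl, braid_db]
    simp only [mul_assoc]
  · refine ⟨h3*c, L3c _ hh3, 4, ?_⟩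
    show h3 * (d*c) * d = h3*c * (d*c)
    conv_lhs => rw [mul_assoc, show (d*c)*d = d*c*d from rfl, braid_dc]
    simp only [mul_assoc]

lemma L4gen (i : Fin 4) (g : G) (h : S4 g) : S4 (g * PresentedGroup.of i) := by
  rcases i with ⟨v, hv⟩; interval_cases v
  · exact L4a g h
  · exact L4b g h
  · exact L4c g h
  · exact L4d g h

lemma inv_of (i : Fin 4) : (PresentedGroup.of i : G)⁻¹ = PresentedGroup.of i :=
  by rw [inv_eq_of_mul_eq_one_right (rel_sq i)]

lemma Ssurj : ∀ g : G, S4 g := by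
  have base : S4 1 :=
    ⟨1*1*1, ⟨1*1, ⟨0, 0, rfl⟩, 0, rfl⟩, 0, by show (1:G) = 1*1*1*1; simp⟩
  intro g
  obtain ⟨w, rfl⟩ := PresentedGroup.mk_surjective rels g
  suffices H : ∀ w : FreeGroup (Fin 4), ∀ g : G, S4 g →
      S4 (g * PresentedGroup.mk rels w) by
    simpa using H w 1 base
  intro w
  refine FreeGroup.induction_on w ?_ ?_ ?_ ?_
  · intro g hg; simpa using hg
  · intro x g hg
    exact L4gen x g hg
  · intro x _ g hg
    have e : (PresentedGroup.mk rels (FreeGroup.of x)⁻¹ : G) = PresentedGroup.of x := by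
      rw [map_inv]; exact inv_of x
    rw [e]
    exact L4gen x g hg
  · intro x y hx hy g hg
    rw [map_mul, ← mul_assoc]
    exact hy _ (hx _ hg)

def F : Fin 2 × Fin 3 × Fin 4 × Fin 5 → G :=
  fun p => w1 p.1 * w2 p.2.1 * w3 p.2.2.1 * w4 p.2.2.2

lemma Fsurj : Function.Surjective F := by
  intro g
  obtain ⟨h3, ⟨h2, ⟨x, y, rfl⟩, z, rfl⟩, zz, rfl⟩ := Ssurj g
  exact ⟨(x, y, z, zz), rfl⟩

-- the homomorphism to Sym 5
def t (i : Fin 4) : Equiv.Perm (Fin 5) := Equiv.swap 0 i.succ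

lemma t_sq : ∀ i : Fin 4, t i ^ 2 = 1 := by decide
lemma t_cube : ∀ i j : Fin 4, i ≠ j → (t i * t j) ^ 3 = 1 := by decide
lemma t_e1 : (t 0 * (t 1 * t 2 * t 1)) ^ 2 = 1 := by decide
lemma t_e2 : (t 0 * (t 2 * t 3 * t 2)) ^ 2 = 1 := by decide
lemma t_e3 : (t 1 * (t 2 * t 3 * t 2)) ^ 2 = 1 := by decide

lemma relsat : ∀ r ∈ rels, FreeGroup.lift t r = 1 := by
  intro r hr
  simp only [rels, Set.mem_union, Set.mem_setOf_eq, Set.mem_insert_iff,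
    Set.mem_singleton_iff] at hr
  rcases hr with ((⟨i, rfl⟩ | ⟨i, j, hij, rfl⟩) | rfl | rfl | rfl) <;>
    simp only [map_pow, map_mul, FreeGroup.lift_apply_of]
  · exact t_sq i
  · exact t_cube i j hij
  · exact t_e1
  · exact t_e2
  · exact t_e3

noncomputable def phi : G →* Equiv.Perm (Fin 5) := PresentedGroup.toGroup relsat

lemma phi_of (i : Fin 4) : phi (PresentedGroup.of i) = t i := PresentedGroup.toGroup.of relsat

lemma swap_decomp : ∀ x y : Fin 5, x ≠ 0 → y ≠ 0 → x ≠ y →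
    Equiv.swap x y = Equiv.swap 0 x * Equiv.swap 0 y * Equiv.swap 0 x := by decide

lemma succ_exists : ∀ y : Fin 5, y ≠ 0 → ∃ i : Fin 4, y = i.succ := by decide

lemma swap_mem (x y : Fin 5) (hxy : x ≠ y) : Equiv.swap x y ∈ phi.range := by
  have hgen : ∀ z : Fin 5, z ≠ 0 → Equiv.swap 0 z ∈ phi.range := by
    intro z hz
    obtain ⟨i, rfl⟩ := succ_exists z hz
    exact ⟨PresentedGroup.of i, phi_of i⟩
  by_cases hx : x = 0
  · subst hx
    exact hgen y (Ne.symm hxy)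
  · by_cases hy : y = 0
    · subst hy
      rw [Equiv.swap_comm]
      exact hgen x hx
    · rw [swap_decomp x y hx hy hxy]
      exact mul_mem (mul_mem (hgen x hx) (hgen y hy)) (hgen x hx)

lemma phi_surj : Function.Surjective phi := by
  rw [← MonoidHom.range_eq_top]
  rw [eq_top_iff, ← Equiv.Perm.closure_isSwap]
  refine (Subgroup.closure_le _).mpr ?_
  rintro σ ⟨x, y, hxy, rfl⟩
  exact swap_mem x y hxy

/-- The group presented by four involutions with all pairwise products of order 3 and the
three cycle relations `(u₁u₂u₃u₂)² = (u₁u₃u₄u₃)² = (u₂u₃u₄u₃)² = e` is isomorphic to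
`Sym₅`, of order 120. -/
theorem presentedGroup_iso_sym5 :
    Nonempty (PresentedGroup rels ≃* Equiv.Perm (Fin 5)) := by
  have hfin : Finite G := Finite.of_surjective F Fsurj
  letI : Fintype G := Fintype.ofFinite G
  have hcard5 : Fintype.card (Equiv.Perm (Fin 5)) = 120 := by
    rw [Fintype.card_perm, Fintype.card_fin]; decide
  have c1 : Fintype.card G ≤ 120 := by
    have h := Fintype.card_le_of_surjective F Fsurj
    simpa using h
  have c2 : 120 ≤ Fintype.card G := by
    have h := Fintype.card_le_of_surjective phi phi_surj
    rw [hcard5] at h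
    exact h
  have hbij : Function.Bijective phi :=
    (Fintype.bijective_iff_surjective_and_card phi).mpr ⟨phi_surj, by omega⟩
  exact ⟨MulEquiv.ofBijective phi hbij⟩

end Stmt15
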